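/- For any complex numbers a, b with a, b, a+b not integers, Γ(a)Γ(1-a-b)/Γ(1-b) + Γ(b)Γ(1-a-b)/Γ(1-a) + Γ(a)Γ(b)/Γ(a+b) = √π · (Γ((1-a-b)/2)/Γ((a+b)/2)) · (Γ(a/2)/Γ((1-a)/2)) · (Γ(b/2)/Γ((1-b)/2)). -/

import Mathlib

open Complex Real

private lemma trig_aux (x y : ℂ) :
    Complex.sin (2 * x) + Complex.sin (2 * y) + Complex.sin (2 * x + 2 * y)
      = 4 * Complex.cos x * Complex.cos y * Complex.sin (x + y) := by
  rw [Complex.sin_add (2 * x) (2 * y), Complex.sin_two_mul, Complex.sin_two_mul,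
    Complex.cos_two_mul, Complex.cos_two_mul, Complex.sin_add x y]
  ring

theorem gamma_identity_plus (a b : ℂ) (ha : ∀ n : ℤ, a ≠ n) (hb : ∀ n : ℤ, b ≠ n)
    (hab : ∀ n : ℤ, a + b ≠ n) :
    Complex.Gamma a * Complex.Gamma (1 - a - b) / Complex.Gamma (1 - b)
      + Complex.Gamma b * Complex.Gamma (1 - a - b) / Complex.Gamma (1 - a)
      + Complex.Gamma a * Complex.Gamma b / Complex.Gamma (a + b)
    = (Real.sqrt Real.pi : ℂ)
      * (Complex.Gamma ((1 - a - b) / 2) / Complex.Gamma ((a + b) / 2))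
      * (Complex.Gamma (a / 2) / Complex.Gamma ((1 - a) / 2))
      * (Complex.Gamma (b / 2) / Complex.Gamma ((1 - b) / 2)) := by
  have hpi : (Real.pi : ℂ) ≠ 0 := ofReal_ne_zero.2 Real.pi_ne_zero
  -- closure properties of non-integrality
  have hG : ∀ z : ℂ, (∀ n : ℤ, z ≠ n) → Complex.Gamma z ≠ 0 := by
    intro z hz
    refine Complex.Gamma_ne_zero fun m => ?_
    simpa using hz (-m)
  have hS : ∀ z : ℂ, (∀ n : ℤ, z ≠ n) → Complex.sin (π * z) ≠ 0 := by
    intro z hz h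
    rw [Complex.sin_eq_zero_iff] at h
    obtain ⟨k, hk⟩ := h
    exact hz k (mul_left_cancel₀ hpi (by rw [hk]; ring))
  have hhalf : ∀ z : ℂ, (∀ n : ℤ, z ≠ n) → ∀ n : ℤ, z / 2 ≠ n := by
    intro z hz n h
    exact hz (2 * n) (by push_cast; linear_combination 2 * h)
  have n1a : ∀ n : ℤ, (1 : ℂ) - a ≠ n := fun n h => ha (1 - n) (by push_cast; linear_combination -h)
  have n1b : ∀ n : ℤ, (1 : ℂ) - b ≠ n := fun n h => hb (1 - n) (by push_cast; linear_combination -h)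
  have n1ab : ∀ n : ℤ, (1 : ℂ) - a - b ≠ n := fun n h =>
    hab (1 - n) (by push_cast; linear_combination -h)
  -- reflection formulas
  have Ra : Complex.Gamma a * Complex.Gamma (1 - a) * Complex.sin (π * a) = π := by
    rw [Complex.Gamma_mul_Gamma_one_sub]; exact div_mul_cancel₀ _ (hS a ha)
  have Rb : Complex.Gamma b * Complex.Gamma (1 - b) * Complex.sin (π * b) = π := by
    rw [Complex.Gamma_mul_Gamma_one_sub]; exact div_mul_cancel₀ _ (hS b hb)
  have Rab : Complex.Gamma (a + b) * Complex.Gamma (1 - a - b) * Complex.sin (π * (a + b)) = π := by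
    have h := Complex.Gamma_mul_Gamma_one_sub (a + b)
    rw [show (1 : ℂ) - (a + b) = 1 - a - b by ring] at h
    rw [h]; exact div_mul_cancel₀ _ (hS (a + b) hab)
  -- the three left-hand terms
  have T1 : Complex.Gamma a * Complex.Gamma (1 - a - b) / Complex.Gamma (1 - b)
      = Complex.Gamma a * Complex.Gamma b * Complex.Gamma (1 - a - b) * Complex.sin (π * b) / π := by
    rw [div_eq_div_iff (hG _ n1b) hpi]
    linear_combination -(Complex.Gamma a * Complex.Gamma (1 - a - b)) * Rb
  have T2 : Complex.Gamma b * Complex.Gamma (1 - a - b) / Complex.Gamma (1 - a)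
      = Complex.Gamma a * Complex.Gamma b * Complex.Gamma (1 - a - b) * Complex.sin (π * a) / π := by
    rw [div_eq_div_iff (hG _ n1a) hpi]
    linear_combination -(Complex.Gamma b * Complex.Gamma (1 - a - b)) * Ra
  have T3 : Complex.Gamma a * Complex.Gamma b / Complex.Gamma (a + b)
      = Complex.Gamma a * Complex.Gamma b * Complex.Gamma (1 - a - b) * Complex.sin (π * (a + b)) / π := by
    rw [div_eq_div_iff (hG _ hab) hpi]
    linear_combination -(Complex.Gamma a * Complex.Gamma b) * Rab
  -- duplication formulas
  have Da : Complex.Gamma (a / 2) * Complex.Gamma ((1 + a) / 2)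
      = Complex.Gamma a * (2 : ℂ) ^ ((1 : ℂ) - a) * (Real.sqrt Real.pi : ℂ) := by
    have h := Complex.Gamma_mul_Gamma_add_half (a / 2)
    rw [show a / 2 + 1 / 2 = (1 + a) / 2 by ring, show 2 * (a / 2) = a by ring] at h
    exact h
  have Db : Complex.Gamma (b / 2) * Complex.Gamma ((1 + b) / 2)
      = Complex.Gamma b * (2 : ℂ) ^ ((1 : ℂ) - b) * (Real.sqrt Real.pi : ℂ) := by
    have h := Complex.Gamma_mul_Gamma_add_half (b / 2)
    rw [show b / 2 + 1 / 2 = (1 + b) / 2 by ring, show 2 * (b / 2) = b by ring] at h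
    exact h
  have Dab : Complex.Gamma ((1 - a - b) / 2) * Complex.Gamma (1 - (a + b) / 2)
      = Complex.Gamma (1 - a - b) * (2 : ℂ) ^ (a + b) * (Real.sqrt Real.pi : ℂ) := by
    have h := Complex.Gamma_mul_Gamma_add_half ((1 - a - b) / 2)
    rw [show (1 - a - b) / 2 + 1 / 2 = 1 - (a + b) / 2 by ring,
      show 2 * ((1 - a - b) / 2) = 1 - a - b by ring] at h
    rw [show (1 : ℂ) - (1 - a - b) = a + b by ring] at h
    exact h
  -- half-argument reflection formulas
  have Ra2 : Complex.Gamma ((1 - a) / 2) * Complex.Gamma ((1 + a) / 2)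
      * Complex.sin (π * ((1 - a) / 2)) = π := by
    have h := Complex.Gamma_mul_Gamma_one_sub ((1 - a) / 2)
    rw [show (1 : ℂ) - (1 - a) / 2 = (1 + a) / 2 by ring] at h
    rw [h]; exact div_mul_cancel₀ _ (hS _ (hhalf _ n1a))
  have Rb2 : Complex.Gamma ((1 - b) / 2) * Complex.Gamma ((1 + b) / 2)
      * Complex.sin (π * ((1 - b) / 2)) = π := by
    have h := Complex.Gamma_mul_Gamma_one_sub ((1 - b) / 2)
    rw [show (1 : ℂ) - (1 - b) / 2 = (1 + b) / 2 by ring] at h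
    rw [h]; exact div_mul_cancel₀ _ (hS _ (hhalf _ n1b))
  have Rab2 : Complex.Gamma ((a + b) / 2) * Complex.Gamma (1 - (a + b) / 2)
      * Complex.sin (π * ((a + b) / 2)) = π := by
    have h := Complex.Gamma_mul_Gamma_one_sub ((a + b) / 2)
    rw [show (1 : ℂ) - (a + b) / 2 = 1 - (a + b) / 2 by ring] at h
    rw [h]; exact div_mul_cancel₀ _ (hS _ (hhalf _ hab))
  -- the three right-hand quotients
  have Qa : Complex.Gamma (a / 2) / Complex.Gamma ((1 - a) / 2)
      = Complex.Gamma a * (2 : ℂ) ^ ((1 : ℂ) - a) * (Real.sqrt Real.pi : ℂ)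
        * Complex.sin (π * ((1 - a) / 2)) / π := by
    rw [div_eq_div_iff (hG _ (hhalf _ n1a)) hpi]
    linear_combination Complex.sin (↑π * ((1 - a) / 2)) * Complex.Gamma ((1 - a) / 2) * Da
      - Complex.Gamma (a / 2) * Ra2
  have Qb : Complex.Gamma (b / 2) / Complex.Gamma ((1 - b) / 2)
      = Complex.Gamma b * (2 : ℂ) ^ ((1 : ℂ) - b) * (Real.sqrt Real.pi : ℂ)
        * Complex.sin (π * ((1 - b) / 2)) / π := by
    rw [div_eq_div_iff (hG _ (hhalf _ n1b)) hpi]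
    linear_combination Complex.sin (↑π * ((1 - b) / 2)) * Complex.Gamma ((1 - b) / 2) * Db
      - Complex.Gamma (b / 2) * Rb2
  have Qab : Complex.Gamma ((1 - a - b) / 2) / Complex.Gamma ((a + b) / 2)
      = Complex.Gamma (1 - a - b) * (2 : ℂ) ^ (a + b) * (Real.sqrt Real.pi : ℂ)
        * Complex.sin (π * ((a + b) / 2)) / π := by
    rw [div_eq_div_iff (hG _ (hhalf _ hab)) hpi]
    linear_combination Complex.sin (↑π * ((a + b) / 2)) * Complex.Gamma ((a + b) / 2) * Dab
      - Complex.Gamma ((1 - a - b) / 2) * Rab2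
  -- powers of two
  have h2pow : (2 : ℂ) ^ (a + b) * ((2 : ℂ) ^ ((1 : ℂ) - a) * (2 : ℂ) ^ ((1 : ℂ) - b)) = 4 := by
    rw [← Complex.cpow_add _ _ two_ne_zero, ← Complex.cpow_add _ _ two_ne_zero,
      show (a + b) + ((1 : ℂ) - a + ((1 : ℂ) - b)) = ((2 : ℕ) : ℂ) by push_cast; ring,
      Complex.cpow_natCast]
    norm_num
  have hsq : (Real.sqrt Real.pi : ℂ) * (Real.sqrt Real.pi : ℂ) = (Real.pi : ℂ) := by
    rw [← Complex.ofReal_mul, Real.mul_self_sqrt Real.pi_pos.le]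
  -- trigonometric identity
  have trig : Complex.sin (π * a) + Complex.sin (π * b) + Complex.sin (π * (a + b))
      = 4 * Complex.sin (π * (1 - a) / 2) * Complex.sin (π * (1 - b) / 2)
        * Complex.sin (π * (a + b) / 2) := by
    have h := trig_aux (π * a / 2) (π * b / 2)
    rw [show 2 * ((π : ℂ) * a / 2) = π * a by ring, show 2 * ((π : ℂ) * b / 2) = π * b by ring,
      show (π : ℂ) * a + π * b = π * (a + b) by ring,
      show (π : ℂ) * a / 2 + π * b / 2 = π * (a + b) / 2 by ring] at h
    rw [show (π : ℂ) * (1 - a) / 2 = π / 2 - π * a / 2 by ring,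
      show (π : ℂ) * (1 - b) / 2 = π / 2 - π * b / 2 by ring,
      Complex.sin_pi_div_two_sub, Complex.sin_pi_div_two_sub]
    linear_combination h
  rw [T1, T2, T3, Qab, Qa, Qb]
  field_simp
  rw [mul_comm b (π : ℂ), mul_comm a (π : ℂ), show (1 - a) * (π : ℂ) / 2 = π * (1 - a) / 2 by ring]
  linear_combination
    Complex.Gamma a * Complex.Gamma b * Complex.Gamma (1 - a - b) * (↑π : ℂ) ^ 2 * trig
    - Complex.Gamma a * Complex.Gamma b * Complex.Gamma (1 - a - b)
        * Complex.sin (↑π * (1 - a) / 2) * Complex.sin (↑π * (1 - b) / 2)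
        * Complex.sin (↑π * (a + b) / 2) * (↑(Real.sqrt Real.pi) : ℂ) ^ 4 * h2pow
    - 4 * Complex.Gamma a * Complex.Gamma b * Complex.Gamma (1 - a - b)
        * Complex.sin (↑π * (1 - a) / 2) * Complex.sin (↑π * (1 - b) / 2)
        * Complex.sin (↑π * (a + b) / 2)
        * ((↑(Real.sqrt Real.pi) : ℂ) * (↑(Real.sqrt Real.pi) : ℂ) + (↑π : ℂ)) * hsq
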